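/- Let (r_u)_{u∈ℤ} be the autocovariance sequence of a stationary scalar time series with spectral density s(ν) = Σ_{u∈ℤ} r_u e^{−2πiuν}, and suppose Σ_{u∈ℤ}(1+|u|)^γ |r_u| < ∞ with γ ≥ 1. Let ξ(ν) = (1/√N) Σ_{n=1}^N y_n e^{−2πi(n−1)ν} where (y_n) has autocovariances r_u. Then for ν₁, ν₂ ∈ [0,1] with ν₂ − ν₁ = k/N, k ∈ {0,…,N−1}: |E[ξ(ν₁) ξ(ν₂)*] − s(ν₁)·1_{ν₁=ν₂}| ≤ C/N, where C depends only on Σ_u |u| |r_u| and Σ_u |r_u|. -/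

import Mathlib

open MeasureTheory
open scoped Real

private lemma integrable_mul_conj' {Ω : Type} [MeasurableSpace Ω] {P : Measure Ω}
    {f g : Ω → ℂ} (hf : MemLp f 2 P) (hg : MemLp g 2 P) :
    Integrable (fun ω => f ω * (starRingEnd ℂ) (g ω)) P := by
  have h := MeasureTheory.L2.integrable_inner (𝕜 := ℂ) (hg.toLp g) (hf.toLp f)
  refine h.congr ?_
  filter_upwards [hg.coeFn_toLp, hf.coeFn_toLp] with ω h1 h2
  simp [RCLike.inner_apply, h1, h2, mul_comm]

/-- For a stationary scalar time series with autocovariances `r_u`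
satisfying `Σ_u (1+|u|)^γ |r_u| < ∞` (γ ≥ 1) and spectral density
`s(ν) = Σ_u r_u e^{−2πiuν}`, for frequencies ν₁, ν₂ ∈ [0,1] with ν₂ − ν₁ = k/N
(k ∈ {0,…,N−1}),
`|E[ξ(ν₁) ξ(ν₂)*] − s(ν₁) 1_{ν₁=ν₂}| ≤ C/N`, where `C` depends only on
`Σ_u |u||r_u|` and `Σ_u |r_u|` (here bounded through `Σ_u (1+|u|)|r_u| ≤ R`). -/
theorem dft_covariance_approximation (R : ℝ) :
    ∃ C : ℝ, ∀ (r : ℤ → ℂ) (γ : ℝ), 1 ≤ γ →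
      Summable (fun u : ℤ => (1 + |(u : ℝ)|) ^ γ * ‖r u‖) →
      (∑' u : ℤ, (1 + |(u : ℝ)|) * ‖r u‖) ≤ R →
      ∀ (N : ℕ), 0 < N →
      ∀ (Ω : Type) (_ : MeasurableSpace Ω) (P : Measure Ω),
        IsProbabilityMeasure P →
        ∀ y : ℤ → Ω → ℂ,
          (∀ n : ℤ, MemLp (y n) 2 P) →
          (∀ n u : ℤ, ∫ ω, y (n + u) ω * (starRingEnd ℂ) (y n ω) ∂P = r u) →
          ∀ (ν₁ ν₂ : ℝ) (k : ℕ), k < N →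
            ν₁ ∈ Set.Icc (0 : ℝ) 1 → ν₂ ∈ Set.Icc (0 : ℝ) 1 →
            ν₂ - ν₁ = (k : ℝ) / N →
            ‖(∫ ω,
                  ((Real.sqrt N : ℂ)⁻¹ * ∑ n ∈ Finset.range N,
                      y (n + 1) ω * Complex.exp (-(2 * Real.pi * Complex.I) * n * ν₁)) *
                    (starRingEnd ℂ)
                      ((Real.sqrt N : ℂ)⁻¹ * ∑ n ∈ Finset.range N,
                          y (n + 1) ω * Complex.exp (-(2 * Real.pi * Complex.I) * n * ν₂))
                  ∂P)
                - (if ν₁ = ν₂ then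
                    ∑' u : ℤ, r u * Complex.exp (-(2 * Real.pi * Complex.I) * u * ν₁)
                  else 0)‖
              ≤ C / N := by
  refine ⟨R, ?_⟩
  intro r γ hγ hsum hR N hN Ω mΩ P hP y hy2 hcov ν₁ ν₂ k hk hν₁ hν₂ hdiff
  have hNR : (0:ℝ) < N := by exact_mod_cast hN
  have hN0 : (N : ℂ) ≠ 0 := by exact_mod_cast hN.ne'
  -- Summability facts
  have hdom : ∀ u : ℤ, (1 + |(u:ℝ)|) * ‖r u‖ ≤ (1 + |(u:ℝ)|) ^ γ * ‖r u‖ := by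
    intro u
    have h1 : (1:ℝ) ≤ 1 + |(u:ℝ)| := le_add_of_nonneg_right (abs_nonneg _)
    have := Real.rpow_le_rpow_of_exponent_le h1 hγ
    rw [Real.rpow_one] at this
    exact mul_le_mul_of_nonneg_right this (norm_nonneg _)
  have hbase : Summable (fun u : ℤ => (1 + |(u:ℝ)|) * ‖r u‖) := by
    refine Summable.of_nonneg_of_le (fun u => by positivity) hdom hsum
  have hrs : Summable (fun u : ℤ => ‖r u‖) := by
    refine Summable.of_nonneg_of_le (fun u => norm_nonneg _) (fun u => ?_) hbase
    nlinarith [abs_nonneg ((u:ℝ)), norm_nonneg (r u)]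
  have habs : Summable (fun u : ℤ => |(u:ℝ)| * ‖r u‖) := by
    refine Summable.of_nonneg_of_le (fun u => by positivity) (fun u => ?_) hbase
    nlinarith [norm_nonneg (r u)]
  have habsR : (∑' u : ℤ, |(u:ℝ)| * ‖r u‖) ≤ R := by
    refine le_trans (Summable.tsum_le_tsum (fun u => ?_) habs hbase) hR
    nlinarith [norm_nonneg (r u)]
  set f : ℤ → ℂ := fun u => r u * Complex.exp (-(2 * Real.pi * Complex.I) * u * ν₁) with hf_def
  have hfnorm : ∀ u : ℤ, ‖f u‖ = ‖r u‖ := by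
    intro u
    have h2 : -(2 * (Real.pi:ℂ) * Complex.I) * u * ν₁ = ((-(2 * Real.pi * u * ν₁) : ℝ) : ℂ) * Complex.I := by
      push_cast; ring
    rw [hf_def]
    simp only []
    rw [h2, norm_mul, Complex.norm_exp_ofReal_mul_I, mul_one]
  have hfs : Summable f := by
    apply Summable.of_norm
    simpa only [hfnorm] using hrs
  set G : ℤ → ℝ := fun u => |(u:ℝ)| * ‖r u‖ with hG_def
  -- the discrete Fourier coefficient w
  set w : ℂ := Complex.exp (2 * Real.pi * Complex.I * ((k : ℂ) / N)) with hw
  set T : ℤ → Finset ℕ :=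
    fun u => (Finset.range N).filter (fun n : ℕ => 0 ≤ (n:ℤ)+u ∧ (n:ℤ)+u < (N:ℤ)) with hT
  have hTsub : ∀ u, T u ⊆ Finset.range N := fun u => Finset.filter_subset _ _
  have hcardT : ∀ u ∈ Finset.Ioo (-(N:ℤ)) N, (T u).card = N - u.natAbs := by
    intro u _
    rcases le_or_gt 0 u with h | h
    · have : T u = Finset.range (N - u.natAbs) := by
        ext n; simp only [hT, Finset.mem_filter, Finset.mem_range]; omega
      rw [this, Finset.card_range]
    · have : T u = Finset.Ico u.natAbs N := by
        ext n; simp only [hT, Finset.mem_filter, Finset.mem_range, Finset.mem_Ico]; omega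
      rw [this, Nat.card_Ico]
  -- Step 1: the integral equals N⁻¹ times an explicit double sum
  have hintg : ∀ m n : ℕ, Integrable
      (fun ω => y ((m:ℤ) + 1) ω * (starRingEnd ℂ) (y ((n:ℤ) + 1) ω)) P :=
    fun m n => integrable_mul_conj' (hy2 _) (hy2 _)
  have hcc : ((Real.sqrt N : ℂ))⁻¹ * (starRingEnd ℂ) ((Real.sqrt N : ℂ))⁻¹ = (N : ℂ)⁻¹ := by
    rw [map_inv₀, Complex.conj_ofReal, ← mul_inv]
    norm_cast
    rw [Real.mul_self_sqrt (Nat.cast_nonneg N)]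
    simp
  have key : (∫ ω,
        ((Real.sqrt N : ℂ)⁻¹ * ∑ n ∈ Finset.range N,
            y (n + 1) ω * Complex.exp (-(2 * Real.pi * Complex.I) * n * ν₁)) *
          (starRingEnd ℂ)
            ((Real.sqrt N : ℂ)⁻¹ * ∑ n ∈ Finset.range N,
                y (n + 1) ω * Complex.exp (-(2 * Real.pi * Complex.I) * n * ν₂))
        ∂P)
      = (N : ℂ)⁻¹ * ∑ m ∈ Finset.range N, ∑ n ∈ Finset.range N,
          (Complex.exp (-(2 * Real.pi * Complex.I) * m * ν₁) *
            (starRingEnd ℂ) (Complex.exp (-(2 * Real.pi * Complex.I) * n * ν₂))) *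
            r ((m : ℤ) - n) := by
    calc
      _ = ∫ ω, ((Real.sqrt N : ℂ))⁻¹ * (starRingEnd ℂ) ((Real.sqrt N : ℂ))⁻¹ *
            ∑ m ∈ Finset.range N, ∑ n ∈ Finset.range N,
              (Complex.exp (-(2 * Real.pi * Complex.I) * m * ν₁) *
                (starRingEnd ℂ) (Complex.exp (-(2 * Real.pi * Complex.I) * n * ν₂))) *
                (y ((m:ℤ) + 1) ω * (starRingEnd ℂ) (y ((n:ℤ) + 1) ω)) ∂P := by
          congr 1
          ext ω
          rw [map_mul, map_sum, mul_mul_mul_comm]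
          rw [Finset.sum_mul_sum]
          congr 1
          refine Finset.sum_congr rfl fun m _ => ?_
          refine Finset.sum_congr rfl fun n _ => ?_
          rw [map_mul]
          ring
      _ = (N : ℂ)⁻¹ * ∑ m ∈ Finset.range N, ∑ n ∈ Finset.range N,
            (Complex.exp (-(2 * Real.pi * Complex.I) * m * ν₁) *
              (starRingEnd ℂ) (Complex.exp (-(2 * Real.pi * Complex.I) * n * ν₂))) *
              r ((m : ℤ) - n) := by
          rw [MeasureTheory.integral_const_mul, hcc]
          congr 1
          rw [integral_finset_sum _ (fun m _ => integrable_finset_sum _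
            (fun n _ => ((hintg m n).const_mul _)))]
          refine Finset.sum_congr rfl fun m _ => ?_
          rw [integral_finset_sum _ (fun n _ => ((hintg m n).const_mul _))]
          refine Finset.sum_congr rfl fun n _ => ?_
          rw [MeasureTheory.integral_const_mul]
          congr 1
          have h := hcov ((n:ℤ) + 1) ((m:ℤ) - n)
          rw [show ((n:ℤ) + 1) + ((m:ℤ) - n) = (m:ℤ) + 1 by ring] at h
          exact h
  -- Step 2: rewrite the coefficients
  have hcoef : ∀ m n : ℕ,
      (Complex.exp (-(2 * Real.pi * Complex.I) * m * ν₁) *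
        (starRingEnd ℂ) (Complex.exp (-(2 * Real.pi * Complex.I) * n * ν₂))) *
        r ((m : ℤ) - n)
      = f ((m:ℤ) - n) * w ^ n := by
    intro m n
    have hν : (ν₂ : ℂ) = (ν₁ : ℂ) + (k : ℂ) / N := by
      have : ν₂ = ν₁ + (k : ℝ) / N := by linarith
      rw [this]; push_cast; ring
    have hconj : (starRingEnd ℂ) (-(2 * (Real.pi:ℂ) * Complex.I) * n * ν₂)
        = 2 * (Real.pi:ℂ) * Complex.I * n * ν₂ := by
      simp only [map_mul, map_neg, Complex.conj_ofReal, map_ofNat, Complex.conj_I, map_natCast]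
      ring
    have h1 : Complex.exp (-(2 * (Real.pi:ℂ) * Complex.I) * m * ν₁ + 2 * (Real.pi:ℂ) * Complex.I * n * ν₂)
        = Complex.exp (-(2 * (Real.pi:ℂ) * Complex.I) * (((m:ℤ) - n : ℤ) : ℂ) * ν₁) *
          Complex.exp ((n : ℂ) * (2 * (Real.pi:ℂ) * Complex.I * ((k : ℂ) / N))) := by
      rw [← Complex.exp_add]
      congr 1
      rw [hν]
      push_cast
      field_simp
      ring
    rw [hf_def, hw, ← Complex.exp_conj, hconj, ← Complex.exp_nat_mul, ← Complex.exp_add, h1]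
    ring
  -- Step 3: fiberwise regrouping
  have hfiber : ∑ m ∈ Finset.range N, ∑ n ∈ Finset.range N, f ((m:ℤ) - n) * w ^ n
      = ∑ u ∈ Finset.Ioo (-(N:ℤ)) N, f u * ∑ n ∈ T u, w ^ n := by
    rw [← Finset.sum_product']
    rw [← Finset.sum_fiberwise_of_maps_to
      (g := fun p : ℕ × ℕ => (p.1 : ℤ) - p.2) (t := Finset.Ioo (-(N:ℤ)) N)
      (fun p hp => by
        simp only [Finset.mem_product, Finset.mem_range] at hp
        simp only [Finset.mem_Ioo]
        omega)]
    refine Finset.sum_congr rfl fun u hu => ?_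
    rw [Finset.mul_sum]
    refine Finset.sum_nbij' (i := fun p => p.2) (j := fun n : ℕ => (((n:ℤ) + u).toNat, n))
      ?_ ?_ ?_ ?_ ?_
    · intro p hp
      simp only [hT, Finset.mem_filter, Finset.mem_product, Finset.mem_range] at hp ⊢
      omega
    · intro n hn
      simp only [hT, Finset.mem_filter, Finset.mem_product, Finset.mem_range] at hn ⊢
      omega
    · intro p hp
      simp only [Finset.mem_filter, Finset.mem_product, Finset.mem_range] at hp
      ext <;> simp <;> omega
    · intro n hn
      simp
    · intro p hp
      simp only [Finset.mem_filter, Finset.mem_product, Finset.mem_range] at hp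
      rw [← hp.2]
  have key2 : (∫ ω,
        ((Real.sqrt N : ℂ)⁻¹ * ∑ n ∈ Finset.range N,
            y (n + 1) ω * Complex.exp (-(2 * Real.pi * Complex.I) * n * ν₁)) *
          (starRingEnd ℂ)
            ((Real.sqrt N : ℂ)⁻¹ * ∑ n ∈ Finset.range N,
                y (n + 1) ω * Complex.exp (-(2 * Real.pi * Complex.I) * n * ν₂))
        ∂P)
      = (N : ℂ)⁻¹ * ∑ u ∈ Finset.Ioo (-(N:ℤ)) N, f u * ∑ n ∈ T u, w ^ n := by
    rw [key, ← hfiber]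
    congr 1
    refine Finset.sum_congr rfl fun m _ => Finset.sum_congr rfl fun n _ => hcoef m n
  rw [key2]
  clear key key2 hfiber hcoef
  -- case split on k
  rcases Nat.eq_zero_or_pos k with hk0 | hk0
  · -- k = 0 : ν₁ = ν₂ and w = 1
    subst hk0
    have hνeq : ν₁ = ν₂ := by
      rw [Nat.cast_zero, zero_div] at hdiff; linarith
    rw [if_pos hνeq]
    have hw1 : w = 1 := by
      rw [hw]; norm_num
    have hWval : ∀ u, (∑ n ∈ T u, w ^ n) = ((T u).card : ℂ) := by
      intro u
      rw [hw1]
      simp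
    -- rewrite the sum
    have hstep : (N : ℂ)⁻¹ * ∑ u ∈ Finset.Ioo (-(N:ℤ)) N, f u * ∑ n ∈ T u, w ^ n
        - ∑' u : ℤ, f u
        = (∑ u ∈ Finset.Ioo (-(N:ℤ)) N, f u * (((T u).card : ℂ)/N - 1))
          - ∑' u : ↑((↑(Finset.Ioo (-(N:ℤ)) N) : Set ℤ)ᶜ), f u := by
      rw [← Summable.sum_add_tsum_compl (s := Finset.Ioo (-(N:ℤ)) N) hfs]
      rw [Finset.mul_sum, sub_add_eq_sub_sub, ← Finset.sum_sub_distrib]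
      congr 1
      refine Finset.sum_congr rfl fun u hu => ?_
      rw [hWval u]
      field_simp
    rw [hstep]
    have hbound1 : ∀ u ∈ Finset.Ioo (-(N:ℤ)) N,
        ‖f u * (((T u).card : ℂ)/N - 1)‖ ≤ G u / N := by
      intro u hu
      have hle : u.natAbs ≤ N := by
        simp only [Finset.mem_Ioo] at hu; omega
      rw [norm_mul, hfnorm]
      have hcv : (((T u).card : ℂ)/N - 1) = (((((T u).card : ℝ))/N - 1 : ℝ) : ℂ) := by
        push_cast; ring
      rw [hcv, Complex.norm_real]
      have hcval : ((T u).card : ℝ) = (N : ℝ) - (u.natAbs : ℝ) := by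
        rw [hcardT u hu]
        push_cast [Nat.cast_sub hle]
        ring
      have hnn : ((N:ℝ) - (u.natAbs:ℝ))/N - 1 ≤ 0 := by
        rw [sub_nonpos, div_le_one hNR]
        have : (0:ℝ) ≤ (u.natAbs : ℝ) := Nat.cast_nonneg _
        linarith
      have habsv : |(((T u).card : ℝ))/N - 1| = (u.natAbs : ℝ)/N := by
        rw [hcval, abs_of_nonpos hnn]
        field_simp
        ring
      rw [Real.norm_eq_abs, habsv, hG_def]
      apply le_of_eq
      simp only [Nat.cast_natAbs, Int.cast_abs]
      ring
    -- final estimate in the equal-frequency case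
    have hsubG : Summable (fun u : ℤ => G u / N) := habs.div_const _
    have hcompl1 : Summable (fun x : ↑((↑(Finset.Ioo (-(N:ℤ)) N) : Set ℤ)ᶜ) => ‖f ↑x‖) := by
      refine Summable.congr (hrs.subtype _) ?_
      intro x
      exact (hfnorm ↑x).symm
    have hcompl2 : Summable (fun x : ↑((↑(Finset.Ioo (-(N:ℤ)) N) : Set ℤ)ᶜ) => G ↑x / N) :=
      hsubG.subtype _
    have hptc : ∀ x : ↑((↑(Finset.Ioo (-(N:ℤ)) N) : Set ℤ)ᶜ), ‖f ↑x‖ ≤ G ↑x / N := by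
      intro x
      have hx := x.2
      simp only [Set.mem_compl_iff, Finset.coe_Ioo, Set.mem_Ioo, not_and_or, not_lt] at hx
      have hge : (N : ℝ) ≤ |((x : ℤ) : ℝ)| := by
        rcases hx with h | h
        · have h' : ((x:ℤ):ℝ) ≤ -(N:ℝ) := by exact_mod_cast h
          calc (N:ℝ) ≤ -((x:ℤ):ℝ) := by linarith
            _ ≤ |((x:ℤ):ℝ)| := neg_le_abs _
        · have h' : (N:ℝ) ≤ ((x:ℤ):ℝ) := by exact_mod_cast h
          exact h'.trans (le_abs_self _)
      calc ‖f ↑x‖ = ‖r ↑x‖ := hfnorm _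
        _ = (N:ℝ) * ‖r ↑x‖ / N := by field_simp
        _ ≤ |((x:ℤ):ℝ)| * ‖r ↑x‖ / N := by gcongr
        _ = G ↑x / N := rfl
    calc ‖(∑ u ∈ Finset.Ioo (-(N:ℤ)) N, f u * (((T u).card : ℂ)/N - 1))
          - ∑' u : ↑((↑(Finset.Ioo (-(N:ℤ)) N) : Set ℤ)ᶜ), f ↑u‖
        ≤ ‖∑ u ∈ Finset.Ioo (-(N:ℤ)) N, f u * (((T u).card : ℂ)/N - 1)‖
          + ‖∑' u : ↑((↑(Finset.Ioo (-(N:ℤ)) N) : Set ℤ)ᶜ), f ↑u‖ := norm_sub_le _ _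
      _ ≤ (∑ u ∈ Finset.Ioo (-(N:ℤ)) N, G u / N)
          + ∑' u : ↑((↑(Finset.Ioo (-(N:ℤ)) N) : Set ℤ)ᶜ), G ↑u / N := by
          refine add_le_add ((norm_sum_le _ _).trans (Finset.sum_le_sum hbound1)) ?_
          exact (norm_tsum_le_tsum_norm hcompl1).trans (Summable.tsum_le_tsum hptc hcompl1 hcompl2)
      _ = ∑' u : ℤ, G u / N := Summable.sum_add_tsum_compl hsubG
      _ = (∑' u : ℤ, G u) / N := by rw [tsum_div_const]
      _ ≤ R / N := (div_le_div_iff_of_pos_right hNR).mpr habsR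
  · -- k ≠ 0 : the frequencies differ and the target term vanishes
    have hνne : ν₁ ≠ ν₂ := by
      have hpos : (0:ℝ) < (k:ℝ)/N := div_pos (by exact_mod_cast hk0) hNR
      intro h
      rw [h, sub_self] at hdiff
      linarith [hdiff ▸ hpos]
    rw [if_neg hνne, sub_zero]
    -- bound each geometric piece
    have hW : ∀ u ∈ Finset.Ioo (-(N:ℤ)) N, ‖∑ n ∈ T u, w ^ n‖ ≤ (u.natAbs : ℝ) := by
      intro u hu
      have hw1 : w ≠ 1 := by
        rw [hw]
        intro h1
        rw [Complex.exp_eq_one_iff] at h1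
        obtain ⟨m, hm⟩ := h1
        have h2 : (2 : ℂ) * Real.pi * Complex.I ≠ 0 := by
          simp [Complex.I_ne_zero, Real.pi_ne_zero]
        rw [mul_comm (m : ℂ)] at hm
        have hdiv : (k : ℂ) / N = (m : ℂ) := mul_left_cancel₀ h2 hm
        rw [div_eq_iff hN0] at hdiv
        have hz : (k : ℤ) = m * N := by exact_mod_cast hdiv
        have hN' : (0:ℤ) < (N:ℤ) := by exact_mod_cast hN
        have hk' : (k:ℤ) < (N:ℤ) := by exact_mod_cast hk
        have hk0' : (0:ℤ) < (k:ℤ) := by exact_mod_cast hk0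
        rcases lt_trichotomy m 0 with h | h | h
        · nlinarith
        · rw [h, zero_mul] at hz; omega
        · nlinarith
      have hwN : w ^ N = 1 := by
        rw [hw, ← Complex.exp_nat_mul]
        have : (N : ℂ) * (2 * Real.pi * Complex.I * ((k : ℂ) / N))
            = (k : ℤ) * (2 * Real.pi * Complex.I) := by
          push_cast
          field_simp
        rw [this, Complex.exp_int_mul_two_pi_mul_I]
      have hgeom : ∑ n ∈ Finset.range N, w ^ n = 0 := by
        rw [geom_sum_eq hw1, hwN, sub_self, zero_div]
      have hsdiff : ∑ n ∈ T u, w ^ n = - ∑ n ∈ Finset.range N \ T u, w ^ n := by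
        have := Finset.sum_sdiff (f := fun n => w ^ n) (hTsub u)
        rw [hgeom] at this
        linear_combination this
      have hwnorm : ∀ n : ℕ, ‖w ^ n‖ = 1 := by
        intro n
        have h2 : (2 : ℂ) * Real.pi * Complex.I * ((k : ℂ) / N)
            = ((2 * Real.pi * k / N : ℝ) : ℂ) * Complex.I := by
          push_cast; field_simp
        rw [hw, h2, norm_pow, Complex.norm_exp_ofReal_mul_I, one_pow]
      rw [hsdiff, norm_neg]
      calc ‖∑ n ∈ Finset.range N \ T u, w ^ n‖
          ≤ ∑ n ∈ Finset.range N \ T u, ‖w ^ n‖ := norm_sum_le _ _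
        _ = ((Finset.range N \ T u).card : ℝ) := by simp [hwnorm]
        _ ≤ (u.natAbs : ℝ) := by
            rw [Finset.card_sdiff_of_subset (hTsub u), Finset.card_range, hcardT u hu]
            have hle : u.natAbs ≤ N := by
              simp only [Finset.mem_Ioo] at hu; omega
            have h3 : N - (N - u.natAbs) = u.natAbs := by omega
            rw [h3]
    rw [norm_mul, norm_inv, Complex.norm_natCast]
    have hS : ‖∑ u ∈ Finset.Ioo (-(N:ℤ)) N, f u * ∑ n ∈ T u, w ^ n‖ ≤ R := by
      calc ‖∑ u ∈ Finset.Ioo (-(N:ℤ)) N, f u * ∑ n ∈ T u, w ^ n‖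
          ≤ ∑ u ∈ Finset.Ioo (-(N:ℤ)) N, ‖f u * ∑ n ∈ T u, w ^ n‖ := norm_sum_le _ _
        _ ≤ ∑ u ∈ Finset.Ioo (-(N:ℤ)) N, G u := by
            refine Finset.sum_le_sum fun u hu => ?_
            calc ‖f u * ∑ n ∈ T u, w ^ n‖ = ‖r u‖ * ‖∑ n ∈ T u, w ^ n‖ := by
                  rw [norm_mul, hfnorm]
              _ ≤ ‖r u‖ * (u.natAbs : ℝ) :=
                  mul_le_mul_of_nonneg_left (hW u hu) (norm_nonneg _)
              _ = G u := by rw [hG_def]; simp only [Nat.cast_natAbs, Int.cast_abs]; ring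
        _ ≤ ∑' u : ℤ, G u := by
            refine Summable.sum_le_tsum _ (fun u _ => ?_) habs
            rw [hG_def]
            positivity
        _ ≤ R := habsR
    rw [div_eq_inv_mul]
    exact mul_le_mul_of_nonneg_left hS (by positivity)
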